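/- Let q ∈ (0,1) ∩ ℚ with q not of the form 1/n for an integer n > 1. Then the Puiseux monoid M_q = ⟨q^n : n ∈ ℕ₀⟩ does not satisfy the ascending chain condition on principal ideals: there exists a strictly ascending non-stabilizing chain of principal ideals (x + M_q) in M_q. -/

import Mathlib

/-- The exponentially cyclic Puiseux monoid `M_q = ⟨q^n : n ∈ ℕ₀⟩`. -/
def Mq (q : ℚ) : AddSubmonoid ℚ :=
  AddSubmonoid.closure (Set.range fun n : ℕ => q ^ n)

theorem Mq_not_ACCP (q : ℚ) (h0 : 0 < q) (h1 : q < 1)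
    (hnot : ¬ ∃ n : ℤ, 1 < n ∧ q = 1 / (n : ℚ)) :
    ∃ x : ℕ → Mq q, ∀ n : ℕ,
      {y : Mq q | ∃ d : Mq q, y = x n + d} ⊂
        {y : Mq q | ∃ d : Mq q, y = x (n + 1) + d} := by
  have hpow : ∀ n : ℕ, (q ^ n : ℚ) ∈ Mq q := fun n =>
    AddSubmonoid.subset_closure ⟨n, rfl⟩
  have hnonneg : ∀ y ∈ Mq q, (0 : ℚ) ≤ y := by
    intro y hy
    induction hy using AddSubmonoid.closure_induction with
    | mem x hx => obtain ⟨n, rfl⟩ := hx; positivity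
    | zero => exact le_refl 0
    | add x y _ _ hx hy => exact add_nonneg hx hy
  set a : ℕ := q.num.toNat with ha
  set b : ℕ := q.den with hb
  have hnumpos : 0 < q.num := Rat.num_pos.mpr h0
  have hacast : (a : ℚ) = (q.num : ℚ) := by
    rw [ha]; exact_mod_cast congrArg Int.cast (Int.toNat_of_nonneg hnumpos.le)
  have hapos : 0 < (a : ℚ) := by rw [hacast]; exact_mod_cast hnumpos
  have haq : (a : ℚ) = q * b := by
    rw [hacast, hb]
    have := Rat.num_div_den q
    field_simp
    exact (Rat.mul_den_eq_num q).symm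
  have hab : a < b := by
    have : (a : ℚ) < (b : ℚ) := by
      rw [haq]
      have hbpos : (0 : ℚ) < b := by exact_mod_cast q.pos
      nlinarith
    exact_mod_cast this
  have hbacast : ((b - a : ℕ) : ℚ) = (b : ℚ) - (a : ℚ) := by
    rw [Nat.cast_sub hab.le]
  -- membership of the chain elements
  have hmem : ∀ (c n : ℕ), ((c : ℚ) * q ^ n) ∈ Mq q := by
    intro c n
    have := AddSubmonoid.nsmul_mem (Mq q) (hpow n) c
    simpa [nsmul_eq_mul] using this
  refine ⟨fun n => ⟨(a : ℚ) * q ^ n, hmem a n⟩, ?_⟩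
  intro n
  have key : (a : ℚ) * q ^ n = (a : ℚ) * q ^ (n + 1) + ((b : ℚ) - (a : ℚ)) * q ^ (n + 1) := by
    rw [pow_succ]
    linear_combination q ^ n * haq
  constructor
  · -- inclusion
    rintro y ⟨d, hd⟩
    refine ⟨⟨((b - a : ℕ) : ℚ) * q ^ (n + 1), hmem _ _⟩ + d, ?_⟩
    apply Subtype.ext
    have hd' : (y : ℚ) = (a : ℚ) * q ^ n + (d : ℚ) := by
      simpa using congrArg Subtype.val hd
    simp only [AddSubmonoid.coe_add]
    rw [hd', hbacast]
    linarith [key]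
  · -- strictness
    intro hsub
    obtain ⟨d, hd⟩ := hsub (show ∃ d : Mq q,
      (⟨(a : ℚ) * q ^ (n + 1), hmem a (n + 1)⟩ : Mq q)
        = ⟨(a : ℚ) * q ^ (n + 1), hmem a (n + 1)⟩ + d from ⟨0, by simp⟩)
    have hd' : (a : ℚ) * q ^ (n + 1) = (a : ℚ) * q ^ n + (d : ℚ) := by
      simpa using congrArg Subtype.val hd
    have hdnn : (0 : ℚ) ≤ (d : ℚ) := hnonneg _ d.2
    have hlt : q ^ (n + 1) < q ^ n := by
      rw [pow_succ]
      nlinarith [pow_pos h0 n]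
    nlinarith
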